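/- arXiv:1909.03914 — 3 statements merged into one kernel-verified Lean document; each statement's English description precedes it below -/
import Mathlib

section
/- Let V be a vector space over a field of characteristic zero and n > 1. The reduced comultiplication Sym^n V → ⊕_{a+b=n, a,b>0} Sym^a V ⊗ Sym^b V, induced by the comultiplication of the symmetric coalgebra (sending a product u₁⋯u_n to the sum over proper nonempty subsets S of {1,…,n} of (∏_{i∈S} u_i) ⊗ (∏_{i∉S} u_i)), is injective. -/
open scoped TensorProduct

open MvPolynomial in
lemma aeval_smul_X_of_isHomogeneous {K : Type*} [CommRing K] {σ : Type*} {n : ℕ}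
    {p : MvPolynomial σ K} (hp : p.IsHomogeneous n) (c : K) :
    MvPolynomial.aeval (fun i => c • MvPolynomial.X i) p = c ^ n • p := by
  conv_lhs => rw [p.as_sum]
  conv_rhs => rw [p.as_sum]
  rw [map_sum, Finset.smul_sum]
  refine Finset.sum_congr rfl fun m hm => ?_
  rw [MvPolynomial.aeval_monomial]
  have hdeg : ∑ i ∈ m.support, m i = n := by
    simpa [Finsupp.weight_apply, Finsupp.sum] using hp (MvPolynomial.mem_support_iff.mp hm)
  rw [Finsupp.prod]
  simp_rw [smul_pow, smul_eq_C_mul]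
  rw [Finset.prod_mul_distrib, ← map_prod, Finset.prod_pow_eq_pow_sum, hdeg, monomial_eq,
    Finsupp.prod]
  rw [algebraMap_eq]
  ring

lemma pow_ineq (n : ℕ) (hn : 2 ≤ n) : 3 ^ n + 2 ^ n < 4 ^ n := by
  induction n with
  | zero => omega
  | succ k ih =>
    rcases Nat.lt_or_ge k 2 with hk | hk
    · interval_cases k
      · omega
      · norm_num
    · have := ih hk
      have h3 : 3 ^ (k+1) + 2 ^ (k+1) ≤ 3 * (3 ^ k + 2 ^ k) := by ring_nf; omega
      calc 3 ^ (k+1) + 2 ^ (k+1) ≤ 3 * (3 ^ k + 2 ^ k) := h3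
        _ < 3 * 4 ^ k := by omega
        _ < 4 ^ (k+1) := by ring_nf; omega

/-- The comultiplication of the symmetric (co)algebra, modelled on the polynomial algebra:
the algebra map determined by `Xᵢ ↦ Xᵢ ⊗ 1 + 1 ⊗ Xᵢ`. -/
noncomputable def symComul (K : Type*) [CommRing K] (σ : Type*) :
    MvPolynomial σ K →ₐ[K] MvPolynomial σ K ⊗[K] MvPolynomial σ K :=
  MvPolynomial.aeval fun i => MvPolynomial.X i ⊗ₜ[K] 1 + 1 ⊗ₜ[K] MvPolynomial.X i

/-- Over a field of characteristic zero, for `n > 1`, the reduced comultiplication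
`Symⁿ V → ⊕_{a+b=n, a,b>0} Symᵃ V ⊗ Symᵇ V` is injective.  Here the symmetric algebra of a
vector space `V` (with basis indexed by `σ`) is modelled by the polynomial algebra, with
`Symⁿ V` the homogeneous component of degree `n`; the statement says that a homogeneous
element `p` of degree `n` whose comultiplication has vanishing reduced part (i.e. `Δ p`
lies in `Symⁿ V ⊗ Sym⁰ V + Sym⁰ V ⊗ Symⁿ V`) must be zero. -/
theorem stmt_3 (K : Type*) [Field K] [CharZero K] (σ : Type*) (n : ℕ) (hn : 1 < n)
    (p : MvPolynomial σ K) (hp : p ∈ MvPolynomial.homogeneousSubmodule σ K n)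
    (h : symComul K σ p ∈ Submodule.span K
        ({z | ∃ q ∈ MvPolynomial.homogeneousSubmodule σ K n, z = q ⊗ₜ[K] 1} ∪
         {z | ∃ q ∈ MvPolynomial.homogeneousSubmodule σ K n, z = 1 ⊗ₜ[K] q})) :
    p = 0 := by
  classical
  set f : MvPolynomial σ K →ₗ[K] MvPolynomial σ K ⊗[K] MvPolynomial σ K :=
    (TensorProduct.mk K (MvPolynomial σ K) (MvPolynomial σ K)).flip 1 with hf
  set g : MvPolynomial σ K →ₗ[K] MvPolynomial σ K ⊗[K] MvPolynomial σ K :=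
    TensorProduct.mk K (MvPolynomial σ K) (MvPolynomial σ K) 1 with hg
  have hA : {z : MvPolynomial σ K ⊗[K] MvPolynomial σ K |
      ∃ q ∈ MvPolynomial.homogeneousSubmodule σ K n, z = q ⊗ₜ[K] 1} =
      ↑((MvPolynomial.homogeneousSubmodule σ K n).map f) := by
    ext z
    simp only [Set.mem_setOf_eq, SetLike.mem_coe, Submodule.mem_map, hf,
      LinearMap.flip_apply, TensorProduct.mk_apply, eq_comm]
  have hB : {z : MvPolynomial σ K ⊗[K] MvPolynomial σ K |
      ∃ q ∈ MvPolynomial.homogeneousSubmodule σ K n, z = 1 ⊗ₜ[K] q} =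
      ↑((MvPolynomial.homogeneousSubmodule σ K n).map g) := by
    ext z
    simp only [Set.mem_setOf_eq, SetLike.mem_coe, Submodule.mem_map, hg,
      TensorProduct.mk_apply, eq_comm]
  rw [hA, hB, Submodule.span_union, Submodule.span_eq, Submodule.span_eq,
    Submodule.mem_sup] at h
  obtain ⟨y, hy, z, hz, hyz⟩ := h
  obtain ⟨Q, hQ, rfl⟩ := hy
  obtain ⟨R, hR, rfl⟩ := hz
  simp only [hf, hg, LinearMap.flip_apply, TensorProduct.mk_apply] at hyz
  simp only [SetLike.mem_coe, MvPolynomial.mem_homogeneousSubmodule] at hp hQ hR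
  have key : ∀ c : K, (c + 1) ^ n • p = c ^ n • Q + R := by
    intro c
    set μ : MvPolynomial σ K ⊗[K] MvPolynomial σ K →ₐ[K] MvPolynomial σ K :=
      Algebra.TensorProduct.productMap (MvPolynomial.aeval fun i => c • MvPolynomial.X i)
        (AlgHom.id K (MvPolynomial σ K)) with hμ
    have hcomp : (μ.comp (symComul K σ)) =
        MvPolynomial.aeval fun i => (c + 1) • MvPolynomial.X i := by
      apply MvPolynomial.algHom_ext
      intro i
      simp only [AlgHom.comp_apply, symComul, MvPolynomial.aeval_X, map_add, hμ,
        Algebra.TensorProduct.productMap_apply_tmul, MvPolynomial.aeval_X, map_one,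
        AlgHom.coe_id, id_eq, mul_one, one_mul, add_smul, one_smul]
    have h1 : μ (symComul K σ p) = (c + 1) ^ n • p := by
      have := congrArg (fun φ => φ p) hcomp
      simp only [AlgHom.comp_apply] at this
      rw [this, aeval_smul_X_of_isHomogeneous hp]
    have h2 : μ (Q ⊗ₜ[K] 1) = c ^ n • Q := by
      rw [hμ, Algebra.TensorProduct.productMap_apply_tmul, map_one, mul_one,
        aeval_smul_X_of_isHomogeneous hQ]
    have h3 : μ (1 ⊗ₜ[K] R) = R := by
      rw [hμ, Algebra.TensorProduct.productMap_apply_tmul, map_one, one_mul]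
      rfl
    rw [← h1, ← hyz, map_add, h2, h3]
  have e0 := key 0
  rw [zero_add, one_pow, one_smul, zero_pow (by omega : n ≠ 0), zero_smul, zero_add] at e0
  have e1 := key 1
  have e2 := key 2
  rw [← e0] at e1 e2
  rw [one_pow, one_smul] at e1
  have hQp : Q = ((1 + 1 : K) ^ n - 1) • p := by
    rw [sub_smul, one_smul, e1]; abel
  rw [hQp, smul_smul] at e2
  have hz : ((2 + 1 : K) ^ n - (2 ^ n * ((1 + 1) ^ n - 1) + 1)) • p = 0 := by
    rw [sub_smul, add_smul, one_smul, e2]; abel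
  have hcoef : ((2 + 1 : K) ^ n - (2 ^ n * ((1 + 1) ^ n - 1) + 1)) ≠ 0 := by
    have hlt := pow_ineq n hn
    have h4 : (4 : ℕ) ^ n = 2 ^ n * 2 ^ n := by rw [← Nat.mul_pow]
    have hcast : ((2:K) + 1) ^ n - (2 ^ n * ((1 + 1) ^ n - 1) + 1) =
        ((3 ^ n + 2 ^ n : ℕ) : K) - ((2 ^ n * 2 ^ n + 1 : ℕ) : K) := by
      push_cast; ring
    rw [hcast, sub_ne_zero]
    exact fun hc => absurd (Nat.cast_injective hc) (by omega)
  rcases smul_eq_zero.mp hz with hc | hp0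
  · exact absurd hc hcoef
  · exact hp0
end

section
/- Let (H, ⟨·,·⟩) be a symplectic vector space over ℚ. On the space of cyclic words |T(H)| (the quotient of the tensor algebra T(H) by the span of all commutators uv − vu), define a bracket on generators by {|x₁⋯x_n|, |y₁⋯y_m|} = Σ_{j=1}^n Σ_{k=1}^m ⟨x_j, y_k⟩ |x_{j+1}⋯x_n x₁⋯x_{j−1} y_{k+1}⋯y_m y₁⋯y_{k−1}|, where all x_j, y_k ∈ H. This bracket is well defined and antisymmetric. -/
/-- The word `x₀ x₁ ⋯ x_{n-1}` in the tensor algebra `T(H)`. -/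
noncomputable def taWord {H : Type*} [AddCommGroup H] [Module ℚ H]
    (x : ℕ → H) (n : ℕ) : TensorAlgebra ℚ H :=
  ((List.range n).map fun i => TensorAlgebra.ι ℚ (x i)).prod

/-- The subspace of `T(H)` spanned by all commutators `uv − vu`; the cyclic quotient
`|T(H)|` is `T(H)` modulo this subspace. -/
noncomputable def commutatorSpan (H : Type*) [AddCommGroup H] [Module ℚ H] :
    Submodule ℚ (TensorAlgebra ℚ H) :=
  Submodule.span ℚ {z | ∃ u v : TensorAlgebra ℚ H, z = u * v - v * u}

namespace Stmt12

open TensorProduct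

variable {H : Type*} [AddCommGroup H] [Module ℚ H]

theorem taWord_congr {x y : ℕ → H} {n : ℕ} (h : ∀ i < n, x i = y i) :
    taWord x n = taWord y n := by
  unfold taWord
  congr 1
  apply List.map_congr_left
  intro i hi
  rw [h i (List.mem_range.mp hi)]

theorem taWord_eq_ofFn (x : ℕ → H) (n : ℕ) :
    taWord x n = (List.ofFn fun i : Fin n => TensorAlgebra.ι ℚ (x i)).prod := by
  unfold taWord
  congr 1
  apply List.ext_getElem <;> simp

/-- One term of the cyclic derivative multilinear map. -/
noncomputable def cycTerm (m : ℕ) (j : Fin (m + 1)) :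
    MultilinearMap ℚ (fun _ : Fin (m + 1) => H) (H ⊗[ℚ] TensorAlgebra ℚ H) :=
  ((MultilinearMap.ofSubsingleton ℚ H H (0 : Fin 1) LinearMap.id).domCoprod
    ((MultilinearMap.mkPiAlgebraFin ℚ m (TensorAlgebra ℚ H)).compLinearMap
      fun _ => TensorAlgebra.ι ℚ)).domDomCongr
    ((finSumFinEquiv.trans (finCongr (Nat.add_comm 1 m))).trans (Equiv.addLeft j))

theorem cycTerm_apply (m : ℕ) (j : Fin (m + 1)) (v : Fin (m + 1) → H) :
    cycTerm (H := H) m j v =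
      v j ⊗ₜ[ℚ]
        taWord (fun i => v ⟨(j.1 + 1 + i) % (m + 1), Nat.mod_lt _ (Nat.succ_pos m)⟩) m := by
  rw [taWord_eq_ofFn]
  unfold cycTerm
  rw [MultilinearMap.domDomCongr_apply, MultilinearMap.domCoprod_apply]
  simp only [MultilinearMap.ofSubsingleton_apply_apply, LinearMap.id_apply,
    MultilinearMap.compLinearMap_apply, MultilinearMap.mkPiAlgebraFin_apply,
    Equiv.trans_apply, Equiv.coe_addLeft, finSumFinEquiv_apply_left,
    finSumFinEquiv_apply_right, finCongr_apply]
  congr 1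
  · congr 1
    apply Fin.ext
    simp [Fin.add_def, Nat.mod_eq_of_lt j.isLt]
  · refine congrArg List.prod (congrArg List.ofFn (funext fun i => ?_))
    refine congrArg (TensorAlgebra.ι ℚ) (congrArg v (Fin.ext ?_))
    simp only [Fin.add_def, Fin.coe_cast, Fin.coe_natAdd]
    congr 1
    omega

noncomputable def cycMl :
    (n : ℕ) → MultilinearMap ℚ (fun _ : Fin n => H) (H ⊗[ℚ] TensorAlgebra ℚ H)
  | 0 => 0
  | (m + 1) => ∑ j : Fin (m + 1), cycTerm m j

/-- The cyclic derivative `T(H) → H ⊗ T(H)`. -/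
noncomputable def cycD : TensorAlgebra ℚ H →ₗ[ℚ] H ⊗[ℚ] TensorAlgebra ℚ H :=
  (DirectSum.toModule ℚ ℕ _ fun n => PiTensorProduct.lift (cycMl (H := H) n)) ∘ₗ
    TensorAlgebra.toDirectSum.toLinearMap

theorem cycD_taWord (x : ℕ → H) (n : ℕ) :
    cycD (taWord x n) = ∑ j ∈ Finset.range n,
      x j ⊗ₜ[ℚ] taWord (fun i => x ((j + 1 + i) % n)) (n - 1) := by
  have h1 : taWord x n = TensorAlgebra.tprod ℚ H n fun i => x i := by
    rw [TensorAlgebra.tprod_apply, taWord_eq_ofFn]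
  rw [h1]
  unfold cycD
  rw [LinearMap.comp_apply, AlgHom.toLinearMap_apply,
    TensorAlgebra.toDirectSum_tensorPower_tprod, ← DirectSum.lof_eq_of ℚ,
    DirectSum.toModule_lof, PiTensorProduct.lift.tprod]
  cases n with
  | zero => simp [cycMl]
  | succ m =>
    show (∑ j : Fin (m + 1), cycTerm m j) _ = _
    rw [MultilinearMap.sum_apply]
    simp only [cycTerm_apply]
    exact Fin.sum_univ_eq_sum_range
      (fun j => x j ⊗ₜ[ℚ] taWord (fun i => x ((j + 1 + i) % (m + 1))) m) (m + 1)

theorem natrot (n a i : ℕ) : ((a + 1 + i) % n + 1) % n = ((a + 1) % n + 1 + i) % n := by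
  conv_rhs => rw [show (a + 1) % n + 1 + i = (a + 1) % n + (1 + i) by omega]
  rw [Nat.mod_add_mod, Nat.mod_add_mod]
  congr 1
  omega

theorem cycD_rot (x : ℕ → H) (n : ℕ) :
    cycD (taWord (fun i => x ((i + 1) % n)) n) = cycD (taWord x n) := by
  rcases Nat.eq_zero_or_pos n with rfl | hn
  · rfl
  rw [cycD_taWord, cycD_taWord]
  refine Finset.sum_nbij' (i := fun j => (j + 1) % n) (j := fun j => (j + (n - 1)) % n)
    ?_ ?_ ?_ ?_ ?_
  · intro a ha
    simp only [Finset.mem_range] at *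
    exact Nat.mod_lt _ hn
  · intro a ha
    simp only [Finset.mem_range] at *
    exact Nat.mod_lt _ hn
  · intro a ha
    simp only [Finset.mem_range] at ha
    show ((a + 1) % n + (n - 1)) % n = a
    rw [Nat.mod_add_mod, show a + 1 + (n - 1) = a + n by omega, Nat.add_mod_right,
      Nat.mod_eq_of_lt ha]
  · intro a ha
    simp only [Finset.mem_range] at ha
    show ((a + (n - 1)) % n + 1) % n = a
    rw [Nat.mod_add_mod, show a + (n - 1) + 1 = a + n by omega, Nat.add_mod_right,
      Nat.mod_eq_of_lt ha]
  · intro a ha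
    simp only [Finset.mem_range] at ha
    show x ((a + 1) % n) ⊗ₜ[ℚ]
        taWord (fun i => x (((a + 1 + i) % n + 1) % n)) (n - 1) =
      x ((a + 1) % n) ⊗ₜ[ℚ]
        taWord (fun i => x (((a + 1) % n + 1 + i) % n)) (n - 1)
    congr 1
    apply taWord_congr
    intro i hi
    rw [natrot]

theorem cycD_rotk (x : ℕ → H) (n t : ℕ) :
    cycD (taWord (fun i => x ((i + t) % n)) n) = cycD (taWord x n) := by
  induction t with
  | zero =>
    congr 1
    apply taWord_congr
    intro i hi
    simp [Nat.mod_eq_of_lt hi]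
  | succ t ih =>
    have h : taWord (fun i => x ((i + (t + 1)) % n)) n
        = taWord (fun i => (fun i' => x ((i' + t) % n)) ((i + 1) % n)) n := by
      apply taWord_congr
      intro i hi
      simp only
      congr 1
      rw [Nat.mod_add_mod]
      congr 1
      omega
    rw [h, cycD_rot (fun i => x ((i + t) % n)) n, ih]

theorem taWord_mul (x y : ℕ → H) (n m : ℕ) :
    taWord x n * taWord y m = taWord (fun i => if i < n then x i else y (i - n)) (n + m) := by
  unfold taWord
  conv_rhs => rw [List.range_add, List.map_append, List.prod_append]
  congr 1
  · refine congrArg List.prod (List.map_congr_left fun i hi => ?_)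
    simp [List.mem_range.mp hi]
  · rw [List.map_map]
    refine congrArg List.prod (List.map_congr_left fun i hi => ?_)
    have h : ¬ (n + i < n) := by omega
    simp [h, Nat.add_sub_cancel_left]

theorem cycD_word_mul_comm (x y : ℕ → H) (n m : ℕ) :
    cycD (taWord x n * taWord y m) = cycD (taWord y m * taWord x n) := by
  rw [taWord_mul, taWord_mul]
  set a := fun i => if i < n then x i else y (i - n) with ha
  set b := fun i => if i < m then y i else x (i - m) with hb
  have hba : taWord b (m + n) = taWord (fun i => a ((i + n) % (n + m))) (m + n) := by
    apply taWord_congr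
    intro i hi
    by_cases h : i < m
    · have h2 : (i + n) % (n + m) = i + n := Nat.mod_eq_of_lt (by omega)
      simp only [ha, hb, h2, if_pos h]
      rw [if_neg (by omega)]
      congr 1
      omega
    · have h2 : (i + n) % (n + m) = i - m := by
        rw [show i + n = (i - m) + (n + m) by omega, Nat.add_mod_right]
        exact Nat.mod_eq_of_lt (by omega)
      simp only [ha, hb, h2, if_neg h]
      rw [if_pos (by omega)]
  rw [hba, show m + n = n + m from Nat.add_comm m n]
  exact (cycD_rotk a (n + m) n).symm

theorem span_taWord :
    Submodule.span ℚ {w : TensorAlgebra ℚ H | ∃ n x, w = taWord x n} = ⊤ := by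
  set S := {w : TensorAlgebra ℚ H | ∃ n x, w = taWord x n} with hS
  rw [Submodule.eq_top_iff']
  intro a
  induction a using TensorAlgebra.induction with
  | algebraMap r =>
    have h1 : (algebraMap ℚ (TensorAlgebra ℚ H)) r = r • taWord (fun _ : ℕ => (0 : H)) 0 := by
      simp [taWord, Algebra.algebraMap_eq_smul_one]
    rw [h1]
    exact Submodule.smul_mem _ _ (Submodule.subset_span ⟨0, _, rfl⟩)
  | ι x =>
    have h1 : TensorAlgebra.ι ℚ x = taWord (fun _ : ℕ => x) 1 := by simp [taWord]
    rw [h1]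
    exact Submodule.subset_span ⟨1, _, rfl⟩
  | mul u v hu hv =>
    have hmul : Submodule.span ℚ S * Submodule.span ℚ S ≤ Submodule.span ℚ S := by
      rw [Submodule.span_mul_span]
      apply Submodule.span_mono
      rintro w ⟨p, ⟨np, xp, rfl⟩, q, ⟨nq, xq, rfl⟩, rfl⟩
      exact ⟨np + nq, _, (taWord_mul xp xq np nq)⟩
    exact hmul (Submodule.mul_mem_mul hu hv)
  | add u v hu hv => exact add_mem hu hv

theorem cycD_mul_comm (u v : TensorAlgebra ℚ H) : cycD (u * v) = cycD (v * u) := by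
  have key : ((LinearMap.mul ℚ (TensorAlgebra ℚ H)).compr₂ cycD) =
      ((LinearMap.mul ℚ (TensorAlgebra ℚ H)).compr₂ cycD).flip := by
    apply LinearMap.ext_on (span_taWord (H := H))
    rintro w ⟨n, x, rfl⟩
    apply LinearMap.ext_on (span_taWord (H := H))
    rintro w' ⟨m, y, rfl⟩
    simp only [LinearMap.compr₂_apply, LinearMap.mul_apply', LinearMap.flip_apply]
    exact cycD_word_mul_comm x y n m
  have := LinearMap.congr_fun (LinearMap.congr_fun key u) v
  simpa using this

variable (ω : H →ₗ[ℚ] H →ₗ[ℚ] ℚ)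

/-- The pairing `(x ⊗ u, y ⊗ v) ↦ ω x y • |u v|`. -/
noncomputable def brAux : (H ⊗[ℚ] TensorAlgebra ℚ H) →ₗ[ℚ] (H ⊗[ℚ] TensorAlgebra ℚ H) →ₗ[ℚ]
    (TensorAlgebra ℚ H ⧸ commutatorSpan H) :=
  TensorProduct.lift <| LinearMap.mk₂ ℚ
    (fun x u => TensorProduct.lift <| LinearMap.mk₂ ℚ
      (fun y v => ω x y • (commutatorSpan H).mkQ (u * v))
      (fun y y' v => by rw [map_add, add_smul])
      (fun c y v => by rw [map_smul, smul_assoc])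
      (fun y v v' => by rw [mul_add, map_add, smul_add])
      (fun c y v => by rw [mul_smul_comm, map_smul, smul_comm]))
    (fun x x' u => by
      apply TensorProduct.ext'
      intro y v
      simp only [TensorProduct.lift.tmul, LinearMap.mk₂_apply, LinearMap.add_apply]
      rw [map_add, LinearMap.add_apply, add_smul])
    (fun c x u => by
      apply TensorProduct.ext'
      intro y v
      simp only [TensorProduct.lift.tmul, LinearMap.mk₂_apply, LinearMap.smul_apply]
      rw [map_smul, LinearMap.smul_apply, smul_assoc])
    (fun x u u' => by
      apply TensorProduct.ext'
      intro y v
      simp only [TensorProduct.lift.tmul, LinearMap.mk₂_apply, LinearMap.add_apply]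
      rw [add_mul, map_add, smul_add])
    (fun c x u => by
      apply TensorProduct.ext'
      intro y v
      simp only [TensorProduct.lift.tmul, LinearMap.mk₂_apply, LinearMap.smul_apply]
      rw [smul_mul_assoc, map_smul, smul_comm])

@[simp] theorem brAux_tmul (x y : H) (u v : TensorAlgebra ℚ H) :
    brAux ω (x ⊗ₜ[ℚ] u) (y ⊗ₜ[ℚ] v) = ω x y • (commutatorSpan H).mkQ (u * v) := by
  simp [brAux]

/-- The bracket on `T(H)` before descending to the quotient. -/
noncomputable def brT : TensorAlgebra ℚ H →ₗ[ℚ] TensorAlgebra ℚ H →ₗ[ℚ]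
    (TensorAlgebra ℚ H ⧸ commutatorSpan H) :=
  (((brAux ω).comp cycD).compl₂ cycD)

theorem brT_apply (u v : TensorAlgebra ℚ H) : brT ω u v = brAux ω (cycD u) (cycD v) := rfl

theorem brT_words (n m : ℕ) (x y : ℕ → H) :
    brT ω (taWord x n) (taWord y m) = ∑ j ∈ Finset.range n, ∑ k ∈ Finset.range m,
      ω (x j) (y k) • (commutatorSpan H).mkQ
        (taWord (fun i => x ((j + 1 + i) % n)) (n - 1) *
          taWord (fun i => y ((k + 1 + i) % m)) (m - 1)) := by
  rw [brT_apply, cycD_taWord, cycD_taWord]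
  simp only [map_sum, LinearMap.sum_apply, brAux_tmul]
  rw [Finset.sum_comm]

theorem brT_comm_left (u v w : TensorAlgebra ℚ H) :
    brT ω (u * v) w = brT ω (v * u) w := by
  rw [brT_apply, brT_apply, cycD_mul_comm]

theorem brT_comm_right (u v w : TensorAlgebra ℚ H) :
    brT ω w (u * v) = brT ω w (v * u) := by
  rw [brT_apply, brT_apply, cycD_mul_comm u v]

theorem brT_ker_right (a : TensorAlgebra ℚ H) :
    commutatorSpan H ≤ LinearMap.ker (brT ω a) := by
  apply Submodule.span_le.mpr
  rintro z ⟨u, v, rfl⟩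
  rw [SetLike.mem_coe, LinearMap.mem_ker, map_sub, brT_comm_right ω u v a, sub_self]

/-- Lift in the second argument. -/
noncomputable def brQ1 : TensorAlgebra ℚ H →ₗ[ℚ]
    (TensorAlgebra ℚ H ⧸ commutatorSpan H) →ₗ[ℚ] (TensorAlgebra ℚ H ⧸ commutatorSpan H) where
  toFun a := (commutatorSpan H).liftQ (brT ω a) (brT_ker_right ω a)
  map_add' a b := by
    refine LinearMap.ext fun q => ?_
    obtain ⟨c, rfl⟩ := (commutatorSpan H).mkQ_surjective q
    simp [Submodule.liftQ_apply]
  map_smul' c a := by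
    refine LinearMap.ext fun q => ?_
    obtain ⟨d, rfl⟩ := (commutatorSpan H).mkQ_surjective q
    simp [Submodule.liftQ_apply]

@[simp] theorem brQ1_apply (a b : TensorAlgebra ℚ H) :
    brQ1 ω a ((commutatorSpan H).mkQ b) = brT ω a b := by
  exact LinearMap.congr_fun ((commutatorSpan H).liftQ_mkQ (brT ω a) (brT_ker_right ω a)) b

theorem brQ1_ker : commutatorSpan H ≤ LinearMap.ker (brQ1 ω) := by
  apply Submodule.span_le.mpr
  rintro z ⟨u, v, rfl⟩
  rw [SetLike.mem_coe, LinearMap.mem_ker, map_sub]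
  refine sub_eq_zero.mpr (LinearMap.ext fun q => ?_)
  obtain ⟨c, rfl⟩ := (commutatorSpan H).mkQ_surjective q
  show (commutatorSpan H).liftQ (brT ω (u * v)) (brT_ker_right ω (u * v))
      ((commutatorSpan H).mkQ c)
    = (commutatorSpan H).liftQ (brT ω (v * u)) (brT_ker_right ω (v * u))
      ((commutatorSpan H).mkQ c)
  rw [Submodule.mkQ_apply, Submodule.liftQ_apply, Submodule.liftQ_apply]
  exact brT_comm_left ω u v c

/-- The bracket on the cyclic quotient. -/
noncomputable def brQ : (TensorAlgebra ℚ H ⧸ commutatorSpan H) →ₗ[ℚ]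
    (TensorAlgebra ℚ H ⧸ commutatorSpan H) →ₗ[ℚ] (TensorAlgebra ℚ H ⧸ commutatorSpan H) :=
  (commutatorSpan H).liftQ (brQ1 ω) (brQ1_ker ω)

@[simp] theorem brQ_apply (a b : TensorAlgebra ℚ H) :
    brQ ω ((commutatorSpan H).mkQ a) ((commutatorSpan H).mkQ b) = brT ω a b := by
  have h1 : brQ ω ((commutatorSpan H).mkQ a) = brQ1 ω a :=
    LinearMap.congr_fun ((commutatorSpan H).liftQ_mkQ (brQ1 ω) (brQ1_ker ω)) a
  rw [h1, brQ1_apply]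

end Stmt12

open TensorProduct in
/-- Let `(H, ω)` be a symplectic vector space over `ℚ`.  On the space of cyclic words
`|T(H)|`, the bracket defined on generators by
`{|x₁⋯x_n|, |y₁⋯y_m|} = Σ_{j,k} ω(x_j, y_k) |x_{j+1}⋯x_{j−1} y_{k+1}⋯y_{k−1}|`
(indices read cyclically) is well defined and antisymmetric: i.e. there is a bilinear map
on `|T(H)|` satisfying this formula on all cyclic words, and it is antisymmetric. -/
theorem stmt_12 (H : Type*) [AddCommGroup H] [Module ℚ H]
    (ω : H →ₗ[ℚ] H →ₗ[ℚ] ℚ) (halt : ∀ x, ω x x = 0)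
    (hnd : ∀ x, (∀ y, ω x y = 0) → x = 0) :
    ∃ br : (TensorAlgebra ℚ H ⧸ commutatorSpan H) →ₗ[ℚ]
        (TensorAlgebra ℚ H ⧸ commutatorSpan H) →ₗ[ℚ]
        (TensorAlgebra ℚ H ⧸ commutatorSpan H),
      (∀ (n m : ℕ) (x y : ℕ → H),
        br ((commutatorSpan H).mkQ (taWord x n)) ((commutatorSpan H).mkQ (taWord y m))
          = ∑ j ∈ Finset.range n, ∑ k ∈ Finset.range m,
              ω (x j) (y k) •
                (commutatorSpan H).mkQ
                  (taWord (fun i => x ((j + 1 + i) % n)) (n - 1) *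
                    taWord (fun i => y ((k + 1 + i) % m)) (m - 1)))
      ∧ (∀ u v, br u v = - br v u) := by
  classical
  have hskew : ∀ x y : H, ω y x = - ω x y := by
    intro x y
    have h := halt (x + y)
    simp only [map_add, LinearMap.add_apply, halt x, halt y] at h
    linarith
  refine ⟨Stmt12.brQ ω, ?_, ?_⟩
  · intro n m x y
    rw [Stmt12.brQ_apply, Stmt12.brT_words]
  · -- antisymmetry
    have hAux : ∀ p q : H ⊗[ℚ] TensorAlgebra ℚ H,
        Stmt12.brAux ω p q = - Stmt12.brAux ω q p := by
      have key : Stmt12.brAux ω = - (Stmt12.brAux ω).flip := by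
        apply TensorProduct.ext'
        intro x u
        apply LinearMap.ext
        intro q
        induction q using TensorProduct.induction_on with
        | zero => simp
        | tmul y v =>
          simp only [Stmt12.brAux_tmul, LinearMap.neg_apply, LinearMap.flip_apply,
            Stmt12.brAux_tmul]
          have hm : (commutatorSpan H).mkQ (v * u) = (commutatorSpan H).mkQ (u * v) := by
            rw [← sub_eq_zero, ← map_sub, Submodule.mkQ_apply, Submodule.Quotient.mk_eq_zero]
            exact Submodule.subset_span ⟨v, u, rfl⟩
          rw [hskew x y, hm, neg_smul, neg_neg]
        | add p1 p2 h1 h2 =>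
          simp only [map_add, LinearMap.neg_apply, LinearMap.add_apply] at h1 h2 ⊢
          rw [h1, h2]
      intro p q
      have h := LinearMap.congr_fun (LinearMap.congr_fun key p) q
      simpa using h
    intro u v
    obtain ⟨a, rfl⟩ := (commutatorSpan H).mkQ_surjective u
    obtain ⟨b, rfl⟩ := (commutatorSpan H).mkQ_surjective v
    rw [Stmt12.brQ_apply, Stmt12.brQ_apply, Stmt12.brT_apply, Stmt12.brT_apply, hAux]
end

section
/- Let (H, ⟨·,·⟩) be a symplectic vector space over ℚ. For each cyclic word |x₁⋯x_n| in |T(H)| define a linear endomorphism κ(|x₁⋯x_n|) of the tensor algebra T(H) by κ(|x₁⋯x_n|)(y₁⋯y_m) = Σ_{j=1}^n Σ_{k=1}^m ⟨x_j, y_k⟩ y₁⋯y_{k−1} x_{j+1}⋯x_n x₁⋯x_{j−1} y_{k+1}⋯y_m. Then κ(|x₁⋯x_n|) is a well-defined derivation of the associative algebra T(H). -/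
namespace Stmt14

variable {H : Type*} [AddCommGroup H] [Module ℚ H]

open TensorAlgebra

local notation "A" => TensorAlgebra ℚ H

/-! ### basic taWord lemmas -/

theorem taWord_zero (x : ℕ → H) : taWord x 0 = 1 := by simp [taWord]

theorem taWord_succ (x : ℕ → H) (n : ℕ) :
    taWord x (n + 1) = taWord x n * TensorAlgebra.ι ℚ (x n) := by
  simp [taWord, List.range_succ]

theorem taWord_congr {x y : ℕ → H} {n : ℕ} (h : ∀ i < n, x i = y i) :
    taWord x n = taWord y n := by
  unfold taWord
  congr 1
  refine List.map_congr_left fun i hi => ?_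
  rw [h i (List.mem_range.mp hi)]

theorem taWord_add (x : ℕ → H) (a b : ℕ) :
    taWord x (a + b) = taWord x a * taWord (fun i => x (a + i)) b := by
  induction b with
  | zero => simp [taWord_zero]
  | succ b ih => rw [← Nat.add_assoc, taWord_succ, ih, taWord_succ, mul_assoc]

/-! ### general derivations via 2×2 matrices -/

variable {B : Type*} [Ring B] [Algebra ℚ B]

noncomputable def theta (α β : A →ₐ[ℚ] B) (d : H →ₗ[ℚ] B) :
    A →ₐ[ℚ] Matrix (Fin 2) (Fin 2) B :=
  TensorAlgebra.lift ℚ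
    { toFun := fun x => !![α (TensorAlgebra.ι ℚ x), d x; 0, β (TensorAlgebra.ι ℚ x)]
      map_add' := by
        intro a b
        ext i j
        fin_cases i <;> fin_cases j <;> simp [map_add]
      map_smul' := by
        intro c a
        ext i j
        fin_cases i <;> fin_cases j <;> simp [map_smul] }

theorem theta_entries (α β : A →ₐ[ℚ] B) (d : H →ₗ[ℚ] B) (u : A) :
    theta α β d u 1 0 = 0 ∧ theta α β d u 0 0 = α u ∧ theta α β d u 1 1 = β u := by
  induction u using TensorAlgebra.induction with
  | algebraMap r =>
      rw [AlgHom.commutes]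
      simp [Matrix.algebraMap_matrix_apply, Algebra.algebraMap_eq_smul_one]
  | ι x =>
      rw [theta, TensorAlgebra.lift_ι_apply]
      refine ⟨?_, ?_, ?_⟩ <;> simp
  | mul a b ha hb =>
      obtain ⟨ha0, ha1, ha2⟩ := ha
      obtain ⟨hb0, hb1, hb2⟩ := hb
      rw [map_mul]
      refine ⟨?_, ?_, ?_⟩ <;>
        simp [Matrix.mul_apply, Fin.sum_univ_two, ha0, ha1, ha2, hb0, hb1, hb2, map_mul]
  | add a b ha hb =>
      obtain ⟨ha0, ha1, ha2⟩ := ha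
      obtain ⟨hb0, hb1, hb2⟩ := hb
      rw [map_add]
      refine ⟨?_, ?_, ?_⟩ <;> simp [ha0, ha1, ha2, hb0, hb1, hb2, map_add]

noncomputable def genDer (α β : A →ₐ[ℚ] B) (d : H →ₗ[ℚ] B) : A →ₗ[ℚ] B where
  toFun u := theta α β d u 0 1
  map_add' u v := by show theta α β d (u + v) 0 1 = _; rw [map_add]; simp
  map_smul' c u := by show theta α β d (c • u) 0 1 = _; rw [map_smul]; simp

theorem genDer_ι (α β : A →ₐ[ℚ] B) (d : H →ₗ[ℚ] B) (x : H) :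
    genDer α β d (TensorAlgebra.ι ℚ x) = d x := by
  simp [genDer, theta, TensorAlgebra.lift_ι_apply]

theorem genDer_mul (α β : A →ₐ[ℚ] B) (d : H →ₗ[ℚ] B) (u v : A) :
    genDer α β d (u * v) = α u * genDer α β d v + genDer α β d u * β v := by
  obtain ⟨hu0, hu1, hu2⟩ := theta_entries α β d u
  obtain ⟨hv0, hv1, hv2⟩ := theta_entries α β d v
  simp only [genDer, LinearMap.coe_mk, AddHom.coe_mk, map_mul, Matrix.mul_apply,
    Fin.sum_univ_two, hu1, hv2]

theorem genDer_one (α β : A →ₐ[ℚ] B) (d : H →ₗ[ℚ] B) :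
    genDer α β d 1 = 0 := by
  simp [genDer, map_one, Matrix.one_apply]

/-- Uniqueness of derivations with given values on generators. -/
theorem der_unique (α β : A →ₐ[ℚ] B) (D D' : A →ₗ[ℚ] B)
    (hD : ∀ u v, D (u * v) = α u * D v + D u * β v)
    (hD' : ∀ u v, D' (u * v) = α u * D' v + D' u * β v)
    (hι : ∀ x, D (TensorAlgebra.ι ℚ x) = D' (TensorAlgebra.ι ℚ x)) : D = D' := by
  have h1 : ∀ (E : A →ₗ[ℚ] B), (∀ u v, E (u * v) = α u * E v + E u * β v) → E 1 = 0 := by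
    intro E hE
    have h := hE 1 1
    simp only [mul_one, map_one, one_mul] at h
    exact (left_eq_add.mp h)
  ext u
  induction u using TensorAlgebra.induction with
  | algebraMap r =>
      rw [Algebra.algebraMap_eq_smul_one, map_smul, map_smul, h1 D hD, h1 D' hD']
  | ι x => exact hι x
  | mul a b ha hb => rw [hD, hD', ha, hb]
  | add a b ha hb => rw [map_add, map_add, ha, hb]


/-! ### the inner derivation `der` -/

noncomputable def der : (H →ₗ[ℚ] A) →ₗ[ℚ] (A →ₗ[ℚ] A) where
  toFun d := genDer (AlgHom.id ℚ A) (AlgHom.id ℚ A) d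
  map_add' d d' := by
    refine der_unique (AlgHom.id ℚ A) (AlgHom.id ℚ A) _ _
      (genDer_mul _ _ _) ?_ ?_
    · intro u v
      simp only [LinearMap.add_apply, genDer_mul, AlgHom.coe_id, id_eq]
      rw [mul_add, add_mul]
      abel
    · intro x
      simp [genDer_ι]
  map_smul' c d := by
    refine der_unique (AlgHom.id ℚ A) (AlgHom.id ℚ A) _ _
      (genDer_mul _ _ _) ?_ ?_
    · intro u v
      simp only [RingHom.id_apply, LinearMap.smul_apply, genDer_mul, AlgHom.coe_id, id_eq,
        smul_add, mul_smul_comm, smul_mul_assoc]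
    · intro x
      simp [genDer_ι]

theorem der_mul (d : H →ₗ[ℚ] A) (u v : A) :
    der d (u * v) = der d u * v + u * der d v := by
  have := genDer_mul (AlgHom.id ℚ A) (AlgHom.id ℚ A) d u v
  simp only [AlgHom.coe_id, id_eq] at this
  rw [show der d = genDer (AlgHom.id ℚ A) (AlgHom.id ℚ A) d from rfl, this]
  abel

theorem der_ι (d : H →ₗ[ℚ] A) (x : H) : der d (TensorAlgebra.ι ℚ x) = d x :=
  genDer_ι _ _ _ _

/-! ### the map Φ and σ -/

variable (ω : H →ₗ[ℚ] H →ₗ[ℚ] ℚ)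

local notation "E" => TensorProduct ℚ (TensorAlgebra ℚ H) (TensorAlgebra ℚ H)

noncomputable def dee (y : H) : H →ₗ[ℚ] E where
  toFun x := ω x y • ((1 : A) ⊗ₜ[ℚ] (1 : A))
  map_add' a b := by simp [add_smul]
  map_smul' c a := by simp [smul_smul]

noncomputable def Phi (y : H) : A →ₗ[ℚ] E :=
  genDer Algebra.TensorProduct.includeLeft Algebra.TensorProduct.includeRight (dee ω y)

theorem Phi_mul (y : H) (u v : A) :
    Phi ω y (u * v) = (u ⊗ₜ[ℚ] (1 : A)) * Phi ω y v + Phi ω y u * ((1 : A) ⊗ₜ[ℚ] v) :=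
  genDer_mul _ _ _ u v

theorem Phi_ι (y : H) (x : H) :
    Phi ω y (TensorAlgebra.ι ℚ x) = ω x y • ((1 : A) ⊗ₜ[ℚ] (1 : A)) :=
  genDer_ι _ _ _ _

theorem Phi_add (y y' : H) : Phi ω (y + y') = Phi ω y + Phi ω y' := by
  refine der_unique _ _ _ _ (genDer_mul _ _ _) ?_ ?_
  · intro u v
    simp only [LinearMap.add_apply, Phi, genDer_mul, mul_add, add_mul]
    abel
  · intro x
    simp only [LinearMap.add_apply, Phi, genDer_ι, dee, LinearMap.coe_mk, AddHom.coe_mk,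
      map_add, add_smul]

theorem Phi_smul (c : ℚ) (y : H) : Phi ω (c • y) = c • Phi ω y := by
  refine der_unique _ _ _ _ (genDer_mul _ _ _) ?_ ?_
  · intro u v
    simp only [LinearMap.smul_apply, Phi, genDer_mul, smul_add, mul_smul_comm, smul_mul_assoc]
  · intro x
    simp only [LinearMap.smul_apply, Phi, genDer_ι, dee, LinearMap.coe_mk, AddHom.coe_mk,
      map_smul, smul_smul, smul_eq_mul]

noncomputable def muTau : E →ₗ[ℚ] A :=
  (LinearMap.mul' ℚ (TensorAlgebra ℚ H)).comp (TensorProduct.comm ℚ _ _).toLinearMap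

theorem muTau_tmul (p q : A) : muTau (p ⊗ₜ[ℚ] q) = q * p := by
  simp [muTau]

theorem muTau_swap (u : A) (e : E) :
    muTau ((u ⊗ₜ[ℚ] (1 : A)) * e) = muTau (e * ((1 : A) ⊗ₜ[ℚ] u)) := by
  induction e with
  | zero => simp
  | tmul p q =>
      rw [Algebra.TensorProduct.tmul_mul_tmul, Algebra.TensorProduct.tmul_mul_tmul,
        muTau_tmul, muTau_tmul, one_mul, mul_one, mul_assoc]
  | add e₁ e₂ h₁ h₂ => rw [mul_add, add_mul, map_add, map_add, h₁, h₂]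

noncomputable def sigma : A →ₗ[ℚ] (H →ₗ[ℚ] A) where
  toFun w :=
    { toFun := fun y => muTau (Phi ω y w)
      map_add' := fun y y' => by
        show muTau (Phi ω (y + y') w) = _
        rw [Phi_add]; simp
      map_smul' := fun c y => by
        show muTau (Phi ω (c • y) w) = _
        rw [Phi_smul]; simp }
  map_add' u v := by ext y; simp
  map_smul' c u := by ext y; simp

theorem sigma_apply (w : A) (y : H) : sigma ω w y = muTau (Phi ω y w) := rfl

theorem sigma_comm (u v : A) : sigma ω (u * v) = sigma ω (v * u) := by
  ext y
  rw [sigma_apply, sigma_apply, Phi_mul, Phi_mul, map_add, map_add,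
    muTau_swap, ← muTau_swap v (Phi ω y u), add_comm]


/-! ### word formulas -/

theorem Phi_word (x : ℕ → H) (n : ℕ) (y : H) :
    Phi ω y (taWord x n) =
      ∑ j ∈ Finset.range n, ω (x j) y •
        (taWord x j ⊗ₜ[ℚ] taWord (fun i => x (j + 1 + i)) (n - 1 - j)) := by
  induction n with
  | zero =>
      rw [taWord_zero]
      have : Phi ω y (1 : A) = 0 := genDer_one _ _ _
      simp [this]
  | succ n ih =>
      rw [taWord_succ, Phi_mul, ih, Phi_ι, Finset.sum_range_succ]
      simp only [Nat.add_sub_cancel]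
      have h1 : (taWord x n ⊗ₜ[ℚ] (1 : A)) * (ω (x n) y • ((1 : A) ⊗ₜ[ℚ] (1 : A)))
          = ω (x n) y • (taWord x n ⊗ₜ[ℚ] taWord (fun i => x (n + 1 + i)) (n - n)) := by
        rw [mul_smul_comm, Algebra.TensorProduct.tmul_mul_tmul, mul_one, one_mul,
          Nat.sub_self, taWord_zero]
      have h2 : (∑ j ∈ Finset.range n, ω (x j) y •
            (taWord x j ⊗ₜ[ℚ] taWord (fun i => x (j + 1 + i)) (n - 1 - j)))
            * ((1 : A) ⊗ₜ[ℚ] TensorAlgebra.ι ℚ (x n))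
          = ∑ j ∈ Finset.range n, ω (x j) y •
            (taWord x j ⊗ₜ[ℚ] taWord (fun i => x (j + 1 + i)) (n - j)) := by
        rw [Finset.sum_mul]
        refine Finset.sum_congr rfl fun j hj => ?_
        have hjn : j < n := Finset.mem_range.mp hj
        have hw : TensorAlgebra.ι ℚ (x n)
            = TensorAlgebra.ι ℚ ((fun i => x (j + 1 + i)) (n - 1 - j)) := by
          congr 1
          simp only
          congr 1
          omega
        rw [smul_mul_assoc, Algebra.TensorProduct.tmul_mul_tmul, mul_one, hw,
          ← taWord_succ, show n - 1 - j + 1 = n - j from by omega]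
      rw [h1, h2, add_comm]


theorem rot_word (x : ℕ → H) {n j : ℕ} (hj : j < n) :
    taWord (fun i => x (j + 1 + i)) (n - 1 - j) * taWord x j
      = taWord (fun i => x ((j + 1 + i) % n)) (n - 1) := by
  rw [show n - 1 = (n - 1 - j) + j from by omega,
    taWord_add (fun i => x ((j + 1 + i) % n)) (n - 1 - j) j]
  simp only [Nat.add_sub_cancel]
  congr 1
  · refine taWord_congr fun i hi => ?_
    show x (j + 1 + i) = x ((j + 1 + i) % n)
    rw [Nat.mod_eq_of_lt (by omega)]
  · refine taWord_congr fun i hi => ?_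
    show x i = x ((j + 1 + (n - 1 - j + i)) % n)
    rw [show j + 1 + (n - 1 - j + i) = n + i from by omega, Nat.add_mod_left,
      Nat.mod_eq_of_lt (by omega)]

theorem sigma_word (x : ℕ → H) (n : ℕ) (y : H) :
    sigma ω (taWord x n) y
      = ∑ j ∈ Finset.range n, ω (x j) y • taWord (fun i => x ((j + 1 + i) % n)) (n - 1) := by
  rw [sigma_apply, Phi_word, map_sum]
  refine Finset.sum_congr rfl fun j hj => ?_
  rw [map_smul, muTau_tmul, rot_word x (Finset.mem_range.mp hj)]

theorem der_formula (n : ℕ) (x : ℕ → H) (W : ℕ → A) (g : H →ₗ[ℚ] A)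
    (hg : ∀ h, g h = ∑ j ∈ Finset.range n, ω (x j) h • W j) (m : ℕ) (y : ℕ → H) :
    der g (taWord y m)
      = ∑ j ∈ Finset.range n, ∑ k ∈ Finset.range m,
          ω (x j) (y k) • (taWord y k * W j * taWord (fun i => y (k + 1 + i)) (m - 1 - k)) := by
  induction m with
  | zero =>
      rw [taWord_zero]
      have h1 : der g (1 : A) = 0 := genDer_one (AlgHom.id ℚ _) (AlgHom.id ℚ _) g
      simp [h1]
  | succ m ih =>
      rw [taWord_succ, der_mul, ih, der_ι, hg]
      simp only [Nat.add_sub_cancel]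
      rw [Finset.sum_mul, Finset.mul_sum, ← Finset.sum_add_distrib]
      refine Finset.sum_congr rfl fun j _ => ?_
      rw [Finset.sum_range_succ, Finset.sum_mul]
      congr 1
      · refine Finset.sum_congr rfl fun k hk => ?_
        have hkm : k < m := Finset.mem_range.mp hk
        have hw : TensorAlgebra.ι ℚ (y m)
            = TensorAlgebra.ι ℚ ((fun i => y (k + 1 + i)) (m - 1 - k)) := by
          congr 1
          simp only
          congr 1
          omega
        rw [smul_mul_assoc, mul_assoc, hw, ← taWord_succ,
          show m - 1 - k + 1 = m - k from by omega, mul_assoc]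
      · rw [mul_smul_comm, Nat.sub_self, taWord_zero, mul_one]

end Stmt14

/-- Let `(H, ω)` be a symplectic vector space over `ℚ`.  For each cyclic word `|x₁⋯x_n|`
the endomorphism of `T(H)` given on words by
`κ(|x₁⋯x_n|)(y₁⋯y_m) = Σ_{j,k} ω(x_j,y_k) y₁⋯y_{k−1} x_{j+1}⋯x_{j−1} y_{k+1}⋯y_m`
is a well-defined derivation of the associative algebra `T(H)`: i.e. there is a linear map
`κ` on the cyclic quotient `|T(H)|`, valued in endomorphisms of `T(H)`, satisfying this
formula, each of whose values is a derivation. -/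
theorem stmt_14 (H : Type*) [AddCommGroup H] [Module ℚ H]
    (ω : H →ₗ[ℚ] H →ₗ[ℚ] ℚ) (halt : ∀ x, ω x x = 0)
    (hnd : ∀ x, (∀ y, ω x y = 0) → x = 0) :
    ∃ κ : (TensorAlgebra ℚ H ⧸ commutatorSpan H) →ₗ[ℚ]
        (TensorAlgebra ℚ H →ₗ[ℚ] TensorAlgebra ℚ H),
      (∀ (n m : ℕ) (x y : ℕ → H),
        κ ((commutatorSpan H).mkQ (taWord x n)) (taWord y m)
          = ∑ j ∈ Finset.range n, ∑ k ∈ Finset.range m,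
              ω (x j) (y k) •
                (taWord y k * taWord (fun i => x ((j + 1 + i) % n)) (n - 1) *
                  taWord (fun i => y (k + 1 + i)) (m - 1 - k)))
      ∧ (∀ ξ, ∀ u v : TensorAlgebra ℚ H, κ ξ (u * v) = κ ξ u * v + u * κ ξ v) := by
  have hker : commutatorSpan H ≤ LinearMap.ker (Stmt14.sigma ω) := by
    rw [commutatorSpan, Submodule.span_le]
    rintro z ⟨u, v, rfl⟩
    exact LinearMap.mem_ker.mpr (by rw [map_sub, Stmt14.sigma_comm, sub_self])
  refine ⟨Stmt14.der.comp ((commutatorSpan H).liftQ (Stmt14.sigma ω) hker), ?_, ?_⟩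
  · intro n m x y
    rw [LinearMap.comp_apply, Submodule.mkQ_apply, Submodule.liftQ_apply]
    exact Stmt14.der_formula ω n x (fun j => taWord (fun i => x ((j + 1 + i) % n)) (n - 1))
      (Stmt14.sigma ω (taWord x n)) (Stmt14.sigma_word ω x n) m y
  · intro ξ u v
    exact Stmt14.der_mul _ u v
end
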